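/- For the dihedral-type matrix T indexed by {1,...,r} with entries T_{ab} = 2cos(2πab/(2r+1)), and any integer m coprime to 2r+1, the map a ↦ (the unique a' ∈ {1,...,r} with a' ≡ ±ma mod (2r+1)) is a well-defined permutation σ_m of {1,...,r}, and T_{σ_m(a), b} = T_{a, σ_m(b)} for all a,b. -/
import Mathlib


open Real

/-- The dihedral-type matrix `T` indexed by `{1,…,r}` (realised as `Fin r` via `a ↦ a+1`),
with entries `T_{ab} = 2 cos(2πab/(2r+1))`. -/
noncomputable def dihedralT (r : ℕ) (a b : Fin r) : ℝ :=
  2 * Real.cos (2 * π * ((a : ℕ) + 1) * ((b : ℕ) + 1) / (2 * r + 1))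

private lemma cos_aux (κ : ℤ) (hκ : 0 < κ) (j k : ℤ)
    (h : j ≡ k [ZMOD κ] ∨ j ≡ -k [ZMOD κ]) :
    Real.cos (2 * π * j / κ) = Real.cos (2 * π * k / κ) := by
  have hκR : (κ : ℝ) ≠ 0 := by exact_mod_cast hκ.ne'
  rcases h with h | h
  · obtain ⟨t, ht⟩ := h.dvd
    have hj : (j : ℝ) = k - κ * t := by
      have : j = k - κ * t := by omega
      exact_mod_cast this
    have harg : 2 * π * (j : ℝ) / κ = 2 * π * k / κ + (-t : ℤ) * (2 * π) := by
      rw [hj]; push_cast; field_simp; ring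
    rw [harg, Real.cos_add_int_mul_two_pi]
  · obtain ⟨t, ht⟩ := h.dvd
    have hj : (j : ℝ) = -k - κ * t := by
      have : j = -k - κ * t := by omega
      exact_mod_cast this
    have harg : 2 * π * (j : ℝ) / κ = -(2 * π * k / κ) + (-t : ℤ) * (2 * π) := by
      rw [hj]; push_cast; field_simp; ring
    rw [harg, Real.cos_add_int_mul_two_pi, Real.cos_neg]

private lemma key_aux (r : ℕ) (hr : 1 ≤ r) (x : ℤ) (hx : ¬ ((2 * (r : ℤ) + 1) ∣ x)) :
    ∃! a' : ℤ, (1 ≤ a' ∧ a' ≤ r) ∧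
      (a' ≡ x [ZMOD (2 * r + 1)] ∨ a' ≡ -x [ZMOD (2 * r + 1)]) := by
  set κ : ℤ := 2 * (r : ℤ) + 1 with hκdef
  have hκ : 0 < κ := by positivity
  set c : ℤ := x % κ with hc
  have hc0 : 0 ≤ c := Int.emod_nonneg x hκ.ne'
  have hclt : c < κ := Int.emod_lt_of_pos x hκ
  have hcne : c ≠ 0 := fun h => hx (Int.dvd_of_emod_eq_zero h)
  have hcx : c ≡ x [ZMOD κ] := by
    show x % κ % κ = x % κ
    exact Int.emod_emod_of_dvd x dvd_rfl
  -- uniqueness helper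
  have uniq : ∀ y z : ℤ, (1 ≤ y ∧ y ≤ r) → (1 ≤ z ∧ z ≤ r) →
      (y ≡ x [ZMOD κ] ∨ y ≡ -x [ZMOD κ]) → (z ≡ x [ZMOD κ] ∨ z ≡ -x [ZMOD κ]) → y = z := by
    intro y z hy hz h1 h2
    have hd : κ ∣ z - y ∨ κ ∣ z + y := by
      rcases h1 with h1 | h1 <;> rcases h2 with h2 | h2 <;>
        obtain ⟨t1, ht1⟩ := h1.dvd <;> obtain ⟨t2, ht2⟩ := h2.dvd
      · exact Or.inl ⟨t1 - t2, by linear_combination ht1 - ht2⟩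
      · exact Or.inr ⟨-t1 - t2, by linear_combination -ht1 - ht2⟩
      · exact Or.inr ⟨-t1 - t2, by linear_combination -ht1 - ht2⟩
      · exact Or.inl ⟨t1 - t2, by linear_combination ht1 - ht2⟩
    rcases hd with hd | hd
    · by_contra hne
      have hpos : 0 < |z - y| := abs_pos.2 (sub_ne_zero.2 fun h => hne h.symm)
      have hle : κ ≤ |z - y| := Int.le_of_dvd hpos ((dvd_abs κ (z - y)).2 hd)
      rcases abs_cases (z - y) with ⟨h', _⟩ | ⟨h', _⟩ <;> omega
    · have hpos : 0 < z + y := by omega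
      have := Int.le_of_dvd hpos hd
      omega
  by_cases hle : c ≤ r
  · refine ⟨c, ⟨⟨by omega, hle⟩, Or.inl hcx⟩, ?_⟩
    intro y hy
    exact uniq y c hy.1 ⟨by omega, hle⟩ hy.2 (Or.inl hcx)
  · refine ⟨κ - c, ⟨⟨by omega, by omega⟩, Or.inr ?_⟩, ?_⟩
    · have : κ ∣ -x - (κ - c) := by
        obtain ⟨t, ht⟩ := hcx.dvd
        exact ⟨-t - 1, by linear_combination -ht⟩
      exact (Int.modEq_iff_dvd.2 this)
    · intro y hy
      refine uniq y (κ - c) hy.1 ⟨by omega, by omega⟩ hy.2 (Or.inr ?_)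
      have : κ ∣ -x - (κ - c) := by
        obtain ⟨t, ht⟩ := hcx.dvd
        exact ⟨-t - 1, by linear_combination -ht⟩
      exact (Int.modEq_iff_dvd.2 this)

theorem dihedralT_galois_symmetry (r : ℕ) (hr : 1 ≤ r) (m : ℤ)
    (hm : Int.gcd m (2 * r + 1) = 1) :
    (∀ a : ℤ, ¬ ((2 * (r : ℤ) + 1) ∣ a) →
      ∃! a' : ℤ, (1 ≤ a' ∧ a' ≤ r) ∧
        (a' ≡ m * a [ZMOD (2 * r + 1)] ∨ a' ≡ -(m * a) [ZMOD (2 * r + 1)])) ∧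
    ∃ σ : Equiv.Perm (Fin r),
      (∀ a : Fin r, (((σ a : ℕ) : ℤ) + 1 ≡ m * ((a : ℕ) + 1) [ZMOD (2 * r + 1)] ∨
        ((σ a : ℕ) : ℤ) + 1 ≡ -(m * ((a : ℕ) + 1)) [ZMOD (2 * r + 1)])) ∧
      ∀ a b : Fin r, dihedralT r (σ a) b = dihedralT r a (σ b) := by
  set κ : ℤ := 2 * (r : ℤ) + 1 with hκdef
  have hκ : 0 < κ := by positivity
  have hcop : IsCoprime (κ : ℤ) m := by
    rw [Int.isCoprime_iff_gcd_eq_one, Int.gcd_comm]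
    exact_mod_cast hm
  have hnd : ∀ a : ℤ, ¬ (κ ∣ a) → ¬ (κ ∣ m * a) := by
    intro a ha hdvd
    exact ha (hcop.dvd_of_dvd_mul_left hdvd)
  have key : ∀ a : ℤ, ¬ (κ ∣ a) →
      ∃! a' : ℤ, (1 ≤ a' ∧ a' ≤ r) ∧
        (a' ≡ m * a [ZMOD κ] ∨ a' ≡ -(m * a) [ZMOD κ]) := by
    intro a ha
    exact key_aux r hr (m * a) (hnd a ha)
  refine ⟨key, ?_⟩
  -- the function
  have hndvd : ∀ a : Fin r, ¬ (κ ∣ ((a : ℕ) : ℤ) + 1) := by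
    intro a hdvd
    have h1 : (0 : ℤ) < (a : ℕ) + 1 := by positivity
    have := Int.le_of_dvd h1 hdvd
    have : ((a : ℕ) : ℤ) < r := by exact_mod_cast a.isLt
    omega
  have hex : ∀ a : Fin r, ∃! a' : ℤ, (1 ≤ a' ∧ a' ≤ r) ∧
      (a' ≡ m * ((a : ℕ) + 1) [ZMOD κ] ∨ a' ≡ -(m * ((a : ℕ) + 1)) [ZMOD κ]) :=
    fun a => key _ (hndvd a)
  choose g hg hguniq using fun a : Fin r => (hex a)
  have hgb := fun a => (hg a).1
  have hgm := fun a => (hg a).2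
  -- realise g as a Fin r valued function
  have hfval : ∀ a : Fin r, ((g a).toNat - 1) < r := by
    intro a
    have := hgb a
    omega
  set f : Fin r → Fin r := fun a => ⟨(g a).toNat - 1, hfval a⟩ with hf
  have hfg : ∀ a : Fin r, (((f a : ℕ) : ℤ) + 1) = g a := by
    intro a
    have := hgb a
    simp only [hf]
    omega
  have hfprop : ∀ a : Fin r,
      (((f a : ℕ) : ℤ) + 1 ≡ m * ((a : ℕ) + 1) [ZMOD κ] ∨
        ((f a : ℕ) : ℤ) + 1 ≡ -(m * ((a : ℕ) + 1)) [ZMOD κ]) := by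
    intro a; rw [hfg a]; exact hgm a
  have hinj : Function.Injective f := by
    intro a b hab
    have h1 := hfprop a
    have h2 := hfprop b
    rw [hab] at h1
    have hab' : (((a : ℕ) : ℤ) + 1) ≡ (((b : ℕ) : ℤ) + 1) [ZMOD κ] ∨
        (((a : ℕ) : ℤ) + 1) ≡ -((((b : ℕ) : ℤ) + 1)) [ZMOD κ] := by
      rcases h1 with h1 | h1 <;> rcases h2 with h2 | h2 <;>
        obtain ⟨t1, ht1⟩ := h1.dvd <;> obtain ⟨t2, ht2⟩ := h2.dvd
      · refine Or.inl (Int.modEq_iff_dvd.2 (hcop.dvd_of_dvd_mul_left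
          (⟨t2 - t1, by linear_combination ht2 - ht1⟩ :
            κ ∣ m * ((((b : ℕ) : ℤ) + 1) - (((a : ℕ) : ℤ) + 1)))))
      · refine Or.inr (Int.modEq_iff_dvd.2 (hcop.dvd_of_dvd_mul_left
          (⟨t2 - t1, by linear_combination ht2 - ht1⟩ :
            κ ∣ m * (-((((b : ℕ) : ℤ) + 1)) - (((a : ℕ) : ℤ) + 1)))))
      · refine Or.inr (Int.modEq_iff_dvd.2 (hcop.dvd_of_dvd_mul_left
          (⟨t1 - t2, by linear_combination ht1 - ht2⟩ :
            κ ∣ m * (-((((b : ℕ) : ℤ) + 1)) - (((a : ℕ) : ℤ) + 1)))))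
      · refine Or.inl (Int.modEq_iff_dvd.2 (hcop.dvd_of_dvd_mul_left
          (⟨t1 - t2, by linear_combination ht1 - ht2⟩ :
            κ ∣ m * ((((b : ℕ) : ℤ) + 1) - (((a : ℕ) : ℤ) + 1)))))
    -- both a+1 and b+1 satisfy key with x = b+1, so equal
    have hk := key_aux r hr (((b : ℕ) : ℤ) + 1) (hndvd b)
    obtain ⟨w, _, hwuniq⟩ := hk
    have h1' : (((a : ℕ) : ℤ) + 1) = w := by
      refine hwuniq _ ⟨⟨by omega, ?_⟩, hab'⟩
      have : ((a : ℕ) : ℤ) < r := by exact_mod_cast a.isLt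
      omega
    have h2' : (((b : ℕ) : ℤ) + 1) = w := by
      refine hwuniq _ ⟨⟨by omega, ?_⟩, Or.inl Int.ModEq.rfl⟩
      have : ((b : ℕ) : ℤ) < r := by exact_mod_cast b.isLt
      omega
    have : ((a : ℕ) : ℤ) = ((b : ℕ) : ℤ) := by omega
    exact Fin.ext (by exact_mod_cast this)
  have hbij : Function.Bijective f := (Finite.injective_iff_bijective).1 hinj
  refine ⟨Equiv.ofBijective f hbij, ?_, ?_⟩
  · intro a
    exact hfprop a
  · intro a b
    have hσ : ∀ c : Fin r, (Equiv.ofBijective f hbij) c = f c := fun _ => rfl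
    rw [hσ, hσ]
    unfold dihedralT
    have harg : ∀ (u v : Fin r), 2 * π * ((u : ℕ) + 1) * ((v : ℕ) + 1) / (2 * r + 1)
        = 2 * π * ((((u : ℕ) : ℤ) + 1) * (((v : ℕ) : ℤ) + 1) : ℤ) / (κ : ℝ) := by
      intro u v
      rw [hκdef]
      push_cast
      ring
    rw [harg, harg]
    congr 1
    apply cos_aux κ hκ
    -- (f a + 1)(b+1) ≡ ± (a+1)(f b + 1)
    have h1 := hfprop a
    have h2 := hfprop b
    rcases h1 with h1 | h1 <;> rcases h2 with h2 | h2
    · refine Or.inl ?_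
      calc ((((f a : ℕ) : ℤ) + 1) * (((b : ℕ) : ℤ) + 1))
          ≡ m * (((a : ℕ) : ℤ) + 1) * (((b : ℕ) : ℤ) + 1) [ZMOD κ] := h1.mul_right _
        _ = (((a : ℕ) : ℤ) + 1) * (m * (((b : ℕ) : ℤ) + 1)) := by ring
        _ ≡ (((a : ℕ) : ℤ) + 1) * (((f b : ℕ) : ℤ) + 1) [ZMOD κ] := (h2.symm).mul_left _
    · refine Or.inr ?_
      calc ((((f a : ℕ) : ℤ) + 1) * (((b : ℕ) : ℤ) + 1))
          ≡ m * (((a : ℕ) : ℤ) + 1) * (((b : ℕ) : ℤ) + 1) [ZMOD κ] := h1.mul_right _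
        _ = -((((a : ℕ) : ℤ) + 1) * (-(m * (((b : ℕ) : ℤ) + 1)))) := by ring
        _ ≡ -((((a : ℕ) : ℤ) + 1) * (((f b : ℕ) : ℤ) + 1)) [ZMOD κ] :=
            (((h2.symm).mul_left _).neg)
    · refine Or.inr ?_
      calc ((((f a : ℕ) : ℤ) + 1) * (((b : ℕ) : ℤ) + 1))
          ≡ -(m * (((a : ℕ) : ℤ) + 1)) * (((b : ℕ) : ℤ) + 1) [ZMOD κ] := h1.mul_right _
        _ = -((((a : ℕ) : ℤ) + 1) * (m * (((b : ℕ) : ℤ) + 1))) := by ring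
        _ ≡ -((((a : ℕ) : ℤ) + 1) * (((f b : ℕ) : ℤ) + 1)) [ZMOD κ] :=
            (((h2.symm).mul_left _).neg)
    · refine Or.inl ?_
      calc ((((f a : ℕ) : ℤ) + 1) * (((b : ℕ) : ℤ) + 1))
          ≡ -(m * (((a : ℕ) : ℤ) + 1)) * (((b : ℕ) : ℤ) + 1) [ZMOD κ] := h1.mul_right _
        _ = (((a : ℕ) : ℤ) + 1) * (-(m * (((b : ℕ) : ℤ) + 1))) := by ring
        _ ≡ (((a : ℕ) : ℤ) + 1) * (((f b : ℕ) : ℤ) + 1) [ZMOD κ] := (h2.symm).mul_left _
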